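/- Let n be a positive integer and let k be an odd divisor of n with k^2 > 2n. Then the sequence (k−1)/2 − n/k + 1, (k−1)/2 − n/k + 2, ..., n/k + (k−1)/2 is a decomposition of n of length 2n/k (in particular, of even length). -/
import Mathlib


/-- The length spectrum of `n`: the set of lengths `l` of decompositions of `n`,
i.e. sequences `a, a+1, ..., a+(l-1)` of `l ≥ 1` consecutive positive integers summing to `n`. -/
def lspec (n : ℕ) : Set ℕ :=
  {l | 0 < l ∧ ∃ a : ℕ, 0 < a ∧ ∑ i ∈ Finset.range l, (a + i) = n}

/-- `A₀`: the even elements of `A`. -/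
def evens (A : Set ℕ) : Set ℕ := {x ∈ A | Even x}

/-- `A₁`: the odd elements of `A`. -/
def odds (A : Set ℕ) : Set ℕ := {x ∈ A | Odd x}

/-- The spectral class of `n`: positive integers with the same length spectrum as `n`. -/
def specClass (n : ℕ) : Set ℕ := {m | 0 < m ∧ lspec m = lspec n}

/-- A set is balanced if it has equally many even and odd elements. -/
def balancedSet (S : Set ℕ) : Prop := (evens S).encard = (odds S).encard

/-- A set is unmixed if it has no even elements. -/
def unmixedSet (S : Set ℕ) : Prop := evens S = ∅

/-- A set is lopsided if it is neither balanced nor unmixed. -/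
def lopsidedSet (S : Set ℕ) : Prop := ¬ balancedSet S ∧ ¬ unmixedSet S

/-- The set of ratios `m'/m` over pairs of complementary factors `m ≤ m'` of `k`;
`q(k)` is the least element of this set. -/
def qSet (k : ℕ) : Set ℚ :=
  {r | ∃ m m' : ℕ, 0 < m ∧ m ≤ m' ∧ m * m' = k ∧ r = (m' : ℚ) / (m : ℚ)}

/-- The exceptional set `E(S)`: numbers `a = b·c` with `b, c ∈ S₁`, `a > max S₀`, and
whose set of divisors of `(max S₁)·a` strictly below `a` is exactly `S₁`. -/
def excSet (S : Set ℕ) : Set ℕ :=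
  {a | (∃ b ∈ odds S, ∃ c ∈ odds S, a = b * c) ∧ sSup (evens S) < a ∧
    {d | d ∣ sSup (odds S) * a ∧ d < a} = odds S}

/-- `P(S)`: the primes strictly greater than `max S₀`. -/
def primesAbove (S : Set ℕ) : Set ℕ := {p | p.Prime ∧ sSup (evens S) < p}

/-- A balanced spectrum is non-excessive if `S₁` is exactly the set of divisors of `max S₁`. -/
def nonExcessive (S : Set ℕ) : Prop := odds S = {d | d ∣ sSup (odds S)}

/-- `γ_p`: the largest `k` with `p^k ∈ S₁`. -/
noncomputable def gammaIdx (S : Set ℕ) (p : ℕ) : ℕ := sSup {k | p ^ k ∈ odds S}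

/-- `μ_p = v_p(max S₁)`. -/
noncomputable def muIdx (S : Set ℕ) (p : ℕ) : ℕ := (sSup (odds S)).factorization p

/-- The excessive index `ε_p = γ_p − μ_p` of a prime `p` with respect to `S`. -/
noncomputable def excIdx (S : Set ℕ) (p : ℕ) : ℕ := gammaIdx S p - muIdx S p

/-- The difference set `D(S)`: `S₁` with its `|S₀|` smallest elements removed when
`|S₀| ≤ |S₁|`, and empty otherwise.  An element `x` of `S₁` survives exactly when at least
`|S₀|` elements of `S₁` lie strictly below it. -/
def diffSet (S : Set ℕ) : Set ℕ :=
  {x ∈ odds S | (evens S).encard ≤ {y ∈ odds S | y < x}.encard}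
/-- If `k` is an odd divisor of `n` with `k² > 2n`, then the `2n/k` consecutive integers
starting at `(k−1)/2 − n/k + 1` are positive and sum to `n`: an even decomposition of
length `2n/k`. -/
theorem odd_factor_gives_even_decomposition (n k : ℕ) (hn : 0 < n) (hk : Odd k)
    (hdvd : k ∣ n) (hgt : 2 * n < k ^ 2) :
    0 < (k - 1) / 2 - n / k + 1 ∧
      ∑ i ∈ Finset.range (2 * n / k), ((k - 1) / 2 - n / k + 1 + i) = n ∧
      Even (2 * n / k) := by
  obtain ⟨m, hm⟩ := hdvd
  obtain ⟨j, hj⟩ := hk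
  have hk0 : 0 < k := by omega
  have hmk : n / k = m := by rw [hm, Nat.mul_div_cancel_left m hk0]
  have h2 : 2 * n / k = 2 * m := by
    rw [hm, show 2 * (k * m) = k * (2 * m) by ring, Nat.mul_div_cancel_left _ hk0]
  have hjm : m ≤ j := by nlinarith [hm, hj, hgt]
  obtain ⟨t, ht⟩ := Nat.exists_eq_add_of_le hjm
  have hd : (k - 1) / 2 = j := by omega
  refine ⟨by omega, ?_, by rw [h2]; exact even_two_mul m⟩
  rw [hmk, hd, h2, ht, Nat.add_sub_cancel_left, Finset.sum_add_distrib, Finset.sum_const,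
    Finset.card_range, smul_eq_mul, hm, hj, ht]
  rcases Nat.eq_zero_or_pos m with h0 | h0
  · subst h0; simp
  · obtain ⟨v, hv⟩ := Nat.exists_eq_add_of_le h0
    have hg := Finset.sum_range_id_mul_two (2 * m)
    subst hv
    have hg' : (∑ i ∈ Finset.range (2 * (1 + v)), i) * 2 = (2 * (1 + v)) * (2 * v + 1) := by
      rw [hg]; congr 1; omega
    nlinarith [hg']
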